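/- Deterministic coherent-segment estimate: let ζ > 0, let G be an m×m Hermitian matrix, and let U_n = exp(i·n^{−ζ/2}·G). Let s < t be positive integers such that (s+1)^{ζ/2} ≥ 4‖G‖_∞. Then for all i ≠ j, |⟨j| U_t U_{t−1} ⋯ U_{s+1} |i⟩|² ≤ 4·(m−1)²·(t−s)²·‖G‖_∞² / (s+1)^ζ. -/

import Mathlib

open Matrix BigOperators

/-- The operator norm of a matrix acting on `(ℂ^m, ‖·‖_∞)`: the maximum row sum of
absolute values of entries. -/
noncomputable def infNorm {m : ℕ} (G : Matrix (Fin m) (Fin m) ℂ) : ℝ :=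
  ⨆ j, ∑ k, ‖G j k‖

/-- `Uprod U s t = U_t · U_{t-1} ⋯ U_{s+1}` (the identity if `t ≤ s`). -/
noncomputable def Uprod (m : ℕ) (U : ℕ → Matrix (Fin m) (Fin m) ℂ) (s : ℕ) :
    ℕ → Matrix (Fin m) (Fin m) ℂ
  | 0 => 1
  | (t + 1) => if t + 1 ≤ s then 1 else U (t + 1) * Uprod m U s t

open scoped Nat

namespace Stmt12Aux


lemma aux_norm_exp_sub_one {A : Type*} [NormedRing A] [NormedAlgebra ℂ A] [CompleteSpace A]
    (x : A) : ‖NormedSpace.exp x - 1‖ ≤ ‖x‖ * Real.exp ‖x‖ := by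
  have hsum : Summable fun n : ℕ => ‖((n ! : ℂ))⁻¹ • x ^ n‖ :=
    NormedSpace.norm_expSeries_summable' x
  have hsum' : Summable fun n : ℕ => ((n ! : ℂ))⁻¹ • x ^ n := hsum.of_norm
  have hmaj : Summable fun n : ℕ => ‖x‖ * (‖x‖ ^ n / n !) :=
    (Real.summable_pow_div_factorial ‖x‖).mul_left _
  have h0 : (((0:ℕ)! : ℂ))⁻¹ • x ^ 0 = 1 := by simp
  have key : NormedSpace.exp x - 1 = ∑' n : ℕ, (((n+1)! : ℂ))⁻¹ • x ^ (n+1) := by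
    rw [NormedSpace.exp_eq_tsum ℂ]
    simp only []
    rw [Summable.tsum_eq_zero_add hsum', h0]
    abel
  rw [key]
  have hb : ∀ n : ℕ, ‖(((n+1)! : ℂ))⁻¹ • x ^ (n+1)‖ ≤ ‖x‖ * (‖x‖ ^ n / n !) := by
    intro n
    rw [norm_smul]
    have h1 : ‖x ^ (n+1)‖ ≤ ‖x‖ ^ (n+1) := norm_pow_le' x n.succ_pos
    have h2 : ‖(((n+1)! : ℂ))⁻¹‖ = (((n+1)! : ℝ))⁻¹ := by
      rw [norm_inv]; norm_num
    rw [h2]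
    calc (((n+1)! : ℝ))⁻¹ * ‖x ^ (n+1)‖ ≤ (((n+1)! : ℝ))⁻¹ * ‖x‖ ^ (n+1) := by
          apply mul_le_mul_of_nonneg_left h1 (by positivity)
      _ ≤ ((n ! : ℝ))⁻¹ * ‖x‖ ^ (n+1) := by
          apply mul_le_mul_of_nonneg_right _ (by positivity)
          apply inv_anti₀ (by positivity)
          exact_mod_cast Nat.factorial_le (Nat.le_succ n)
      _ = ‖x‖ * (‖x‖ ^ n / n !) := by ring
  calc ‖∑' n : ℕ, (((n+1)! : ℂ))⁻¹ • x ^ (n+1)‖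
      ≤ ∑' n : ℕ, ‖x‖ * (‖x‖ ^ n / n !) := by
        apply tsum_of_norm_bounded hmaj.hasSum hb
    _ = ‖x‖ * ∑' n : ℕ, ‖x‖ ^ n / n ! := tsum_mul_left
    _ = ‖x‖ * Real.exp ‖x‖ := by
        congr 1
        rw [Real.exp_eq_exp_ℝ, NormedSpace.exp_eq_tsum_div]

lemma exp_quarter_le_two : Real.exp (1/4 : ℝ) ≤ 2 := by
  have h4 : Real.exp ((1:ℝ)/4) ^ (4:ℕ) = Real.exp 1 := by
    rw [← Real.exp_nat_mul]; norm_num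
  have h1 : Real.exp 1 < 2.7182818286 := Real.exp_one_lt_d9
  by_contra h
  push_neg at h
  have h2 : (2:ℝ) ^ (4:ℕ) < Real.exp ((1:ℝ)/4) ^ (4:ℕ) :=
    pow_lt_pow_left₀ h (by norm_num) (by norm_num)
  rw [h4] at h2
  norm_num at h2
  linarith

attribute [local instance] Matrix.linftyOpNormedRing Matrix.linftyOpNormedAlgebra

variable {m : ℕ}

lemma rowsum_le_norm (B : Matrix (Fin m) (Fin m) ℂ) (j : Fin m) :
    ∑ k, ‖B j k‖ ≤ ‖B‖ := by
  rw [Matrix.linfty_opNorm_def]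
  have h1 : (∑ k, ‖B j k‖₊ : NNReal) ≤ Finset.univ.sup fun i => ∑ k, ‖B i k‖₊ :=
    Finset.le_sup (f := fun i => ∑ k, ‖B i k‖₊) (Finset.mem_univ j)
  calc ∑ k, ‖B j k‖ = ((∑ k, ‖B j k‖₊ : NNReal) : ℝ) := by push_cast; rfl
    _ ≤ _ := by exact_mod_cast h1

lemma infNorm_eq_norm [NeZero m] (B : Matrix (Fin m) (Fin m) ℂ) :
    infNorm B = ‖B‖ := by
  haveI : Nonempty (Fin m) := Fin.pos_iff_nonempty.mp (Nat.pos_of_ne_zero (NeZero.ne m))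
  unfold infNorm
  apply le_antisymm
  · exact ciSup_le fun j => rowsum_le_norm B j
  · obtain ⟨j, _, hj⟩ := Finset.exists_mem_eq_sup (Finset.univ : Finset (Fin m))
      Finset.univ_nonempty (fun i => ∑ k, ‖B i k‖₊)
    rw [Matrix.linfty_opNorm_def, hj]
    calc ((∑ k, ‖B j k‖₊ : NNReal) : ℝ) = ∑ k, ‖B j k‖ := by push_cast; rfl
      _ ≤ ⨆ j, ∑ k, ‖B j k‖ :=
          le_ciSup (Set.Finite.bddAbove (Set.finite_range fun j => ∑ k, ‖B j k‖)) j

lemma entry_le_mul_norm (B Q : Matrix (Fin m) (Fin m) ℂ)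
    (hQ : ∀ k i, ‖Q k i‖ ≤ 1) (j i : Fin m) :
    ‖(B * Q) j i‖ ≤ ‖B‖ := by
  rw [Matrix.mul_apply]
  calc ‖∑ k, B j k * Q k i‖ ≤ ∑ k, ‖B j k * Q k i‖ := norm_sum_le _ _
    _ ≤ ∑ k, ‖B j k‖ := by
        apply Finset.sum_le_sum
        intro k _
        calc ‖B j k * Q k i‖ ≤ ‖B j k‖ * ‖Q k i‖ := norm_mul_le _ _
          _ ≤ ‖B j k‖ * 1 := mul_le_mul_of_nonneg_left (hQ k i) (norm_nonneg _)
          _ = ‖B j k‖ := mul_one _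
    _ ≤ ‖B‖ := rowsum_le_norm B j

end Stmt12Aux

section Stmt12Main

attribute [local instance] Matrix.linftyOpNormedRing Matrix.linftyOpNormedAlgebra

/-- deterministic coherent-segment estimate: with
`U_n = exp(i n^{−ζ/2} G)` Hermitian, `0 < s < t` and `(s+1)^{ζ/2} ≥ 4‖G‖_∞`, for `i ≠ j`
one has `|⟨j| U_t ⋯ U_{s+1} |i⟩|² ≤ 4(m−1)²(t−s)²‖G‖_∞²/(s+1)^ζ`. -/
theorem stmt12 (m : ℕ) (ζ : ℝ) (hζ : 0 < ζ)
    (G : Matrix (Fin m) (Fin m) ℂ) (hG : G.IsHermitian)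
    (U : ℕ → Matrix (Fin m) (Fin m) ℂ)
    (hU : ∀ n : ℕ, U n =
      NormedSpace.exp ((Complex.I * (((n : ℝ) ^ (-(ζ / 2)) : ℝ) : ℂ)) • G))
    (s t : ℕ) (hs : 0 < s) (hst : s < t)
    (hbig : 4 * infNorm G ≤ ((s : ℝ) + 1) ^ (ζ / 2))
    (i j : Fin m) (hij : i ≠ j) :
    ‖(Uprod m U s t) j i‖ ^ 2 ≤
      4 * ((m : ℝ) - 1) ^ 2 * ((t : ℝ) - (s : ℝ)) ^ 2 * infNorm G ^ 2 /
        ((s : ℝ) + 1) ^ ζ := by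
  classical
  have hm2 : 2 ≤ m := by
    by_contra h
    push_neg at h
    interval_cases m
    · exact i.elim0
    · exact hij (Subsingleton.elim i j)
  haveI : NeZero m := ⟨by omega⟩
  have hg : infNorm G = ‖G‖ := Stmt12Aux.infNorm_eq_norm G
  rw [hg] at hbig ⊢
  set c : ℝ := ((s:ℝ)+1) ^ (ζ/2) with hcdef
  have hs1 : (0:ℝ) < (s:ℝ) + 1 := by positivity
  have hc : 0 < c := Real.rpow_pos_of_pos hs1 _
  have hgnn : (0:ℝ) ≤ ‖G‖ := norm_nonneg _
  have hq : ‖G‖ / c ≤ 1/4 := by rw [div_le_iff₀ hc]; linarith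
  -- unitarity of the U n
  have hskew : ∀ n : ℕ, ((Complex.I * (((n : ℝ) ^ (-(ζ / 2)) : ℝ) : ℂ)) • G)ᴴ
      = -((Complex.I * (((n : ℝ) ^ (-(ζ / 2)) : ℝ) : ℂ)) • G) := by
    intro n
    rw [Matrix.conjTranspose_smul, hG.eq, ← neg_smul]
    congr 1
    rw [star_mul']
    simp [Complex.conj_I, Complex.conj_ofReal]
  have hUmem : ∀ n, U n ∈ Matrix.unitaryGroup (Fin m) ℂ := by
    intro n
    rw [Matrix.mem_unitaryGroup_iff', hU n, Matrix.star_eq_conjTranspose,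
      ← Matrix.exp_conjTranspose, hskew n,
      ← Matrix.exp_add_of_commute _ _ (Commute.neg_left (Commute.refl ((Complex.I * (((n : ℝ) ^ (-(ζ / 2)) : ℝ) : ℂ)) • G))),
      neg_add_cancel, NormedSpace.exp_zero]
  have hQmem : ∀ n, Uprod m U s n ∈ Matrix.unitaryGroup (Fin m) ℂ := by
    intro n
    induction n with
    | zero =>
      show (1 : Matrix (Fin m) (Fin m) ℂ) ∈ _
      exact one_mem _
    | succ n ih =>
      show (if n + 1 ≤ s then 1 else U (n + 1) * Uprod m U s n) ∈ _
      split_ifs with h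
      · exact one_mem _
      · exact mul_mem (hUmem _) ih
  have hQent : ∀ n, ∀ k i' : Fin m, ‖(Uprod m U s n) k i'‖ ≤ 1 :=
    fun n k i' => entry_norm_bound_of_unitary (hQmem n) k i'
  -- one-step bound
  have hstep : ∀ n : ℕ, s + 1 ≤ n → ‖U n - 1‖ ≤ 2 * (‖G‖ / c) := by
    intro n hn
    have hnpos : (0:ℝ) < (n:ℝ) := by
      have : 0 < n := by omega
      exact_mod_cast this
    set ε : ℝ := (n:ℝ) ^ (-(ζ/2)) with hε
    have hεnn : 0 ≤ ε := Real.rpow_nonneg hnpos.le _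
    have hnorme : ‖(Complex.I * (ε : ℂ))‖ = ε := by
      rw [norm_mul, Complex.norm_I, one_mul, Complex.norm_real, Real.norm_eq_abs,
        abs_of_nonneg hεnn]
    have hA : ‖(Complex.I * (ε:ℂ)) • G‖ = ε * ‖G‖ := by rw [norm_smul, hnorme]
    have hεle : ε ≤ c⁻¹ := by
      rw [hε, hcdef, ← Real.rpow_neg hs1.le]
      apply Real.rpow_le_rpow_of_nonpos hs1
      · have : s + 1 ≤ n := hn
        exact_mod_cast this
      · linarith
    have hAle : ‖(Complex.I * (ε:ℂ)) • G‖ ≤ ‖G‖ / c := by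
      rw [hA]
      calc ε * ‖G‖ ≤ c⁻¹ * ‖G‖ := mul_le_mul_of_nonneg_right hεle hgnn
        _ = ‖G‖ / c := by rw [div_eq_mul_inv]; ring
    rw [hU n]
    calc ‖NormedSpace.exp ((Complex.I * (ε:ℂ)) • G) - 1‖
        ≤ ‖(Complex.I * (ε:ℂ)) • G‖ * Real.exp ‖(Complex.I * (ε:ℂ)) • G‖ :=
          Stmt12Aux.aux_norm_exp_sub_one _
      _ ≤ (‖G‖/c) * Real.exp (1/4) := by
          apply mul_le_mul hAle (Real.exp_le_exp.2 (hAle.trans hq)) (Real.exp_pos _).le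
          positivity
      _ ≤ (‖G‖/c) * 2 :=
          mul_le_mul_of_nonneg_left Stmt12Aux.exp_quarter_le_two (by positivity)
      _ = 2 * (‖G‖/c) := mul_comm _ _
  -- telescoping
  set δ : ℝ := 2 * (‖G‖ / c) with hδdef
  have hδnn : 0 ≤ δ := by positivity
  have key : ∀ n : ℕ, ‖(Uprod m U s n) j i‖ ≤ ((n - s : ℕ) : ℝ) * δ := by
    intro n
    induction n with
    | zero =>
      rw [show Uprod m U s 0 = 1 from rfl, Matrix.one_apply_ne (Ne.symm hij)]
      simp
    | succ n ih =>
      by_cases hns : n + 1 ≤ s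
      · rw [show Uprod m U s (n+1) = 1 from by simp only [Uprod, if_pos hns],
          Matrix.one_apply_ne (Ne.symm hij)]
        simp
        positivity
      · have hsn : s ≤ n := by omega
        set Q := Uprod m U s n with hQdef
        have hP : Uprod m U s (n+1) = U (n+1) * Q := by
          rw [hQdef]
          simp only [Uprod, if_neg hns]
        have hsplit : (U (n+1) * Q) j i = ((U (n+1) - 1) * Q) j i + Q j i := by
          rw [Matrix.sub_mul, Matrix.one_mul, Matrix.sub_apply]
          ring
        have h1 : ‖((U (n+1) - 1) * Q) j i‖ ≤ δ :=
          (Stmt12Aux.entry_le_mul_norm _ _ (hQent n) j i).trans (hstep (n+1) (by omega))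
        have hcast : (((n+1) - s : ℕ) : ℝ) = ((n - s : ℕ) : ℝ) + 1 := by
          rw [Nat.succ_sub hsn]
          push_cast
          ring
        rw [hP, hsplit]
        calc ‖((U (n+1) - 1) * Q) j i + Q j i‖
            ≤ ‖((U (n+1) - 1) * Q) j i‖ + ‖Q j i‖ := norm_add_le _ _
          _ ≤ δ + ((n - s:ℕ):ℝ) * δ := add_le_add h1 ih
          _ = (((n+1) - s : ℕ):ℝ) * δ := by rw [hcast]; ring
  -- conclusion
  have hfin := key t
  have hNr : ((t - s : ℕ) : ℝ) = (t:ℝ) - (s:ℝ) := by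
    rw [Nat.cast_sub hst.le]
  have hXpos : (0:ℝ) < ((s:ℝ)+1) ^ ζ := Real.rpow_pos_of_pos hs1 _
  have hc2 : c ^ 2 = ((s:ℝ)+1) ^ ζ := by
    rw [hcdef, ← Real.rpow_natCast (((s:ℝ)+1) ^ (ζ/2)) 2, ← Real.rpow_mul hs1.le]
    norm_num
  have hsq : ‖(Uprod m U s t) j i‖ ^ 2 ≤ (((t - s:ℕ):ℝ) * δ) ^ 2 :=
    pow_le_pow_left₀ (norm_nonneg _) hfin 2
  have hm1 : (1:ℝ) ≤ ((m:ℝ) - 1) := by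
    have h2m : (2:ℝ) ≤ (m:ℝ) := by exact_mod_cast hm2
    linarith
  have hm1sq : (1:ℝ) ≤ ((m:ℝ) - 1) ^ 2 := by nlinarith
  calc ‖(Uprod m U s t) j i‖ ^ 2 ≤ (((t - s:ℕ):ℝ) * δ) ^ 2 := hsq
    _ = 4 * ((t:ℝ) - (s:ℝ))^2 * ‖G‖^2 / ((s:ℝ)+1)^ζ := by
        rw [hNr, hδdef, ← hc2]
        field_simp
        ring
    _ ≤ 4 * ((m:ℝ)-1)^2 * ((t:ℝ)-(s:ℝ))^2 * ‖G‖^2 / ((s:ℝ)+1)^ζ := by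
        apply (div_le_div_iff_of_pos_right hXpos).2
        nlinarith [mul_nonneg (sq_nonneg ((t:ℝ)-(s:ℝ))) (sq_nonneg ‖G‖)]

end Stmt12Main
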